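/- Let R be a Prüfer domain and P a nonzero prime ideal that is sharp, i.e., there is a finitely generated ideal I ⊆ P contained only in the maximal ideals that contain P. Then for every prime Q of R properly containing P there is a finitely generated ideal J with P ⊊ J ⊆ Q; that is, P is antesharp. -/

import Mathlib

/-- An ideal is divisorial if `I = (R : (R : I))`, phrased via fractional ideals. -/
def IsDivisorial (R : Type*) [CommRing R] [IsDomain R] (I : Ideal R) : Prop :=
  (1 / (1 / (I : FractionalIdeal (nonZeroDivisors R) (FractionRing R))) :
    FractionalIdeal (nonZeroDivisors R) (FractionRing R))
    = (I : FractionalIdeal (nonZeroDivisors R) (FractionRing R))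

/-- An ideal is invertible if it is a unit as a fractional ideal. -/
def IsInvertibleIdeal (R : Type*) [CommRing R] [IsDomain R] (I : Ideal R) : Prop :=
  IsUnit (I : FractionalIdeal (nonZeroDivisors R) (FractionRing R))

/-- A Prüfer domain: every nonzero finitely generated ideal is invertible. -/
def IsPrufer (R : Type*) [CommRing R] [IsDomain R] : Prop :=
  ∀ I : Ideal R, I ≠ ⊥ → I.FG → IsInvertibleIdeal R I

/-- A prime `P` is sharp if it contains a finitely generated ideal contained
only in the maximal ideals that contain `P`. -/
def IsSharp (R : Type*) [CommRing R] (P : Ideal R) : Prop :=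
  ∃ I : Ideal R, I.FG ∧ I ≤ P ∧ ∀ M : Ideal R, M.IsMaximal → I ≤ M → P ≤ M

/-- Extracting a "Bezout-like" relation from invertibility of `span {x, p}`. -/
lemma bezout_of_invertible (R : Type*) [CommRing R] [IsDomain R]
    (x p : R) (hx0 : x ≠ 0)
    (hinv : IsInvertibleIdeal R (Ideal.span {x, p})) :
    ∃ a b c d : R, a + b = 1 ∧ p * a = x * c ∧ x * b = p * d := by
  set K := FractionRing R
  set f : R →+* K := algebraMap R K with hf
  set A : Ideal R := Ideal.span {x, p} with hA
  have hAbot : A ≠ ⊥ := fun h => hx0 (by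
    have : x ∈ A := Ideal.subset_span (by simp)
    rw [h] at this; simpa using this)
  have hA0 : (A : FractionalIdeal (nonZeroDivisors R) K) ≠ 0 :=
    FractionalIdeal.coeIdeal_ne_zero.mpr hAbot
  obtain ⟨B, hB⟩ : ∃ B, (A : FractionalIdeal (nonZeroDivisors R) K) * B = 1 :=
    hinv.exists_right_inv
  have hmul : (A : FractionalIdeal (nonZeroDivisors R) K) *
      (1 / (A : FractionalIdeal (nonZeroDivisors R) K)) = 1 :=
    FractionalIdeal.mul_div_self_cancel_iff.mpr ⟨B, hB⟩
  -- decompose A as sum of two principal fractional ideals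
  have hAdec : (A : FractionalIdeal (nonZeroDivisors R) K) =
      FractionalIdeal.spanSingleton (nonZeroDivisors R) (f x) +
      FractionalIdeal.spanSingleton (nonZeroDivisors R) (f p) := by
    rw [hA, Ideal.span_insert, FractionalIdeal.coeIdeal_sup,
      FractionalIdeal.coeIdeal_span_singleton, FractionalIdeal.coeIdeal_span_singleton]
  set Binv := (1 / (A : FractionalIdeal (nonZeroDivisors R) K)) with hBinv
  have h1 : (1 : K) ∈ FractionalIdeal.spanSingleton (nonZeroDivisors R) (f x) * Binv +
      FractionalIdeal.spanSingleton (nonZeroDivisors R) (f p) * Binv := by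
    rw [← add_mul, ← hAdec, hmul]
    exact FractionalIdeal.one_mem_one _
  rw [← FractionalIdeal.sup_eq_add] at h1
  obtain ⟨u, hu, v, hv, huv⟩ := Submodule.mem_sup.mp h1
  obtain ⟨s, hsB, rfl⟩ := FractionalIdeal.mem_singleton_mul.mp hu
  obtain ⟨t, htB, rfl⟩ := FractionalIdeal.mem_singleton_mul.mp hv
  -- s, t multiply A into R
  have hmemA : ∀ y ∈ Binv, ∀ r ∈ A, ∃ w : R, f w = y * f r := by
    intro y hy r hr
    have : y * f r ∈ (1 : FractionalIdeal (nonZeroDivisors R) K) :=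
      (FractionalIdeal.mem_div_iff_of_ne_zero hA0).mp hy (f r)
        (FractionalIdeal.mem_coeIdeal_of_mem _ hr)
    obtain ⟨w, hw⟩ := (FractionalIdeal.mem_one_iff _).mp this
    exact ⟨w, hw⟩
  have hxA : x ∈ A := Ideal.subset_span (by simp)
  have hpA : p ∈ A := Ideal.subset_span (by simp)
  obtain ⟨a, ha⟩ := hmemA s hsB x hxA
  obtain ⟨c, hc⟩ := hmemA s hsB p hpA
  obtain ⟨b, hb⟩ := hmemA t htB p hpA
  obtain ⟨d, hd⟩ := hmemA t htB x hxA
  have hinj : Function.Injective f := IsFractionRing.injective R K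
  refine ⟨a, b, c, d, ?_, ?_, ?_⟩
  · apply hinj
    rw [map_add, map_one, ha, hb, ← huv]; ring
  · apply hinj
    rw [map_mul, map_mul, ha, hc]; ring
  · apply hinj
    rw [map_mul, map_mul, hb, hd]; ring

/-- In a Prüfer domain a sharp prime is antesharp: every prime properly containing
`P` contains a finitely generated ideal properly containing `P`. -/
theorem antesharp_of_sharp (R : Type*) [CommRing R] [IsDomain R]
    (hR : IsPrufer R) (P : Ideal R) (hP : P.IsPrime) (h0 : P ≠ ⊥)
    (hsharp : IsSharp R P) :
    ∀ Q : Ideal R, Q.IsPrime → P < Q →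
      ∃ J : Ideal R, J.FG ∧ P < J ∧ J ≤ Q := by
  obtain ⟨I, hIfg, hIP, hImax⟩ := hsharp
  intro Q hQ hPQ
  obtain ⟨x, hxQ, hxP⟩ := SetLike.exists_of_lt hPQ
  have hx0 : x ≠ 0 := fun h => hxP (h ▸ P.zero_mem)
  set J : Ideal R := I ⊔ Ideal.span {x} with hJ
  have hxJ : x ∈ J := le_sup_right (a := I) (Ideal.subset_span (by simp) : x ∈ Ideal.span {x})
  have hJQ : J ≤ Q := sup_le (hIP.trans hPQ.le) ((Ideal.span_le).mpr (by simpa using hxQ))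
  have hPJ : P ≤ J := by
    intro p hp
    -- span {x, p} is invertible
    have hAbot : Ideal.span {x, p} ≠ ⊥ := fun h => hx0 (by
      have : x ∈ Ideal.span {x, p} := Ideal.subset_span (by simp)
      rw [h] at this; simpa using this)
    have hAfg : (Ideal.span {x, p}).FG := Submodule.fg_span (Set.toFinite _)
    obtain ⟨a, b, c, d, hab, hpa, hxb⟩ :=
      bezout_of_invertible R x p hx0 (hR _ hAbot hAfg)
    -- show the colon ideal is the whole ring
    by_contra hpJ
    have hKne : J.colon (Ideal.span {p}) ≠ ⊤ := by
      intro htop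
      have : (1 : R) ∈ J.colon (Ideal.span {p}) := htop ▸ Submodule.mem_top
      rw [Ideal.mem_colon_span_singleton, one_mul] at this
      exact hpJ this
    obtain ⟨M, hM, hKM⟩ := Ideal.exists_le_maximal _ hKne
    have hJM : J ≤ M := fun j hj =>
      hKM (Ideal.mem_colon_span_singleton.mpr (J.mul_mem_right p hj))
    have hPM : P ≤ M := hImax M hM ((le_sup_left.trans hJM : I ≤ M))
    by_cases haM : a ∈ M
    · -- b = 1 - a ∉ M, x * b = p * d ∈ P, contradiction
      have hbM : b ∉ M := fun hbM => hM.ne_top (Ideal.eq_top_of_isUnit_mem _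
        (by simpa [hab] using M.add_mem haM hbM) isUnit_one)
      have : x * b ∈ P := hxb ▸ P.mul_mem_right d hp
      rcases hP.mem_or_mem this with h | h
      · exact hxP h
      · exact hbM (hPM h)
    · -- a ∉ M but a ∈ colon ideal ≤ M
      apply haM
      apply hKM
      rw [Ideal.mem_colon_span_singleton]
      have : a * p = c * x := by rw [mul_comm a p, hpa]; ring
      rw [this]
      exact J.mul_mem_left c hxJ
  refine ⟨J, Submodule.FG.sup hIfg ((Submodule.fg_span (Set.toFinite {x}) : (Ideal.span {x}).FG)), ?_, hJQ⟩
  exact lt_of_le_of_ne hPJ (fun h => hxP (h.symm ▸ hxJ))
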